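/- Under the assumptions of the CSK convergence theorem (S a subspace embedding for A with distortion ε ∈ (0,1), x₀ in the row space of A, Ax⋆ = b with x⋆ in the row space of A), the iterates satisfy ‖x_k - x⋆‖₂² ≤ (1 - (1-ε)³ σ_r(A)²/(n ‖A‖₂²))^k ‖x₀ - x⋆‖₂² for all k ≥ 0; in particular x_k → x⋆ since 0 ≤ 1 - (1-ε)³ σ_r(A)²/(n‖A‖₂²) < 1. -/

import Mathlib

open scoped BigOperators

/-- Squared Euclidean norm of a vector in `ℝ^n`. -/
noncomputable def sqNorm {n : ℕ} (x : Fin n → ℝ) : ℝ := ∑ i, x i ^ 2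

/-- Squared Frobenius norm of a matrix. -/
noncomputable def frobSq {d n : ℕ} (M : Matrix (Fin d) (Fin n) ℝ) : ℝ :=
  ∑ i, ∑ j, (M i j) ^ 2

/-- The `k`-th largest singular value of a real matrix, via the Courant–Fischer
max-min characterization: the supremum of nonnegative `c` such that some
`k`-dimensional subspace `V` satisfies `‖Ay‖ ≥ c‖y‖` for all `y ∈ V`. -/
noncomputable def sv {m n : ℕ} (A : Matrix (Fin m) (Fin n) ℝ) (k : ℕ) : ℝ :=
  sSup {c : ℝ | 0 ≤ c ∧ ∃ V : Submodule ℝ (Fin n → ℝ), Module.finrank ℝ V = k ∧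
    ∀ y ∈ V, c ^ 2 * sqNorm y ≤ sqNorm (A.mulVec y)}

open Matrix

namespace CSK

lemma sqNorm_eq_dot {n : ℕ} (x : Fin n → ℝ) : sqNorm x = x ⬝ᵥ x := by
  simp [sqNorm, dotProduct, sq]

lemma sqNorm_nonneg {n : ℕ} (x : Fin n → ℝ) : 0 ≤ sqNorm x :=
  Finset.sum_nonneg fun i _ => sq_nonneg _

lemma sqNorm_eq_zero {n : ℕ} {x : Fin n → ℝ} (h : sqNorm x = 0) : x = 0 := by
  funext i
  have := (Finset.sum_eq_zero_iff_of_nonneg (fun i _ => sq_nonneg (x i))).1 h i (Finset.mem_univ i)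
  simpa using pow_eq_zero_iff (n := 2) (by norm_num) |>.1 this

lemma sqNorm_pos {n : ℕ} {x : Fin n → ℝ} (h : x ≠ 0) : 0 < sqNorm x :=
  lt_of_le_of_ne (sqNorm_nonneg x) fun h0 => h (sqNorm_eq_zero h0.symm)

lemma sqNorm_smul {n : ℕ} (t : ℝ) (x : Fin n → ℝ) : sqNorm (t • x) = t ^ 2 * sqNorm x := by
  simp [sqNorm, Finset.mul_sum, mul_pow]

lemma sqNorm_add {n : ℕ} (x y : Fin n → ℝ) :
    sqNorm (x + y) = sqNorm x + 2 * (x ⬝ᵥ y) + sqNorm y := by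
  simp only [sqNorm, dotProduct, Pi.add_apply, Finset.mul_sum, ← Finset.sum_add_distrib]
  congr 1; funext i; ring

lemma sqNorm_mulVec_le {p n : ℕ} (A : Matrix (Fin p) (Fin n) ℝ) (y : Fin n → ℝ) :
    sqNorm (A.mulVec y) ≤ frobSq A * sqNorm y := by
  rw [frobSq, Finset.sum_mul]
  refine Finset.sum_le_sum fun i _ => ?_
  exact Finset.sum_mul_sq_le_sq_mul_sq Finset.univ (A i) y

lemma frobSq_eq_sum_cols {p n : ℕ} (A : Matrix (Fin p) (Fin n) ℝ) :
    frobSq A = ∑ j, sqNorm (A.mulVec (Pi.single j 1)) := by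
  rw [frobSq, Finset.sum_comm]
  refine Finset.sum_congr rfl fun j _ => Finset.sum_congr rfl fun i _ => ?_
  congr 1
  simp [Matrix.mulVec, dotProduct, Pi.single_apply]

lemma frobSq_eq_sum_rows {p n : ℕ} (A : Matrix (Fin p) (Fin n) ℝ) :
    frobSq A = ∑ i, sqNorm (A i) := by
  rfl


def svSet {m n : ℕ} (A : Matrix (Fin m) (Fin n) ℝ) (k : ℕ) : Set ℝ :=
  {c : ℝ | 0 ≤ c ∧ ∃ V : Submodule ℝ (Fin n → ℝ), Module.finrank ℝ V = k ∧
    ∀ y ∈ V, c ^ 2 * sqNorm y ≤ sqNorm (A.mulVec y)}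

lemma sv_eq {m n : ℕ} (A : Matrix (Fin m) (Fin n) ℝ) (k : ℕ) : sv A k = sSup (svSet A k) := rfl

lemma svSet_bddAbove {m n : ℕ} (A : Matrix (Fin m) (Fin n) ℝ) {k : ℕ} (hk : k ≠ 0) :
    BddAbove (svSet A k) := by
  refine ⟨Real.sqrt (frobSq A), fun c hc => ?_⟩
  obtain ⟨hc0, V, hV, hprop⟩ := hc
  have hVbot : V ≠ ⊥ := by
    intro h; rw [h] at hV; simp at hV; exact hk hV.symm
  obtain ⟨y, hyV, hy0⟩ := Submodule.exists_mem_ne_zero_of_ne_bot hVbot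
  have h1 := (hprop y hyV).trans (sqNorm_mulVec_le A y)
  have h2 : c ^ 2 ≤ frobSq A := le_of_mul_le_mul_right (by simpa [mul_comm] using h1) (sqNorm_pos hy0)
  have hf : 0 ≤ frobSq A := (sq_nonneg c).trans h2
  have hf : 0 ≤ frobSq A := (sq_nonneg c).trans h2
  exact (Real.le_sqrt hc0 hf).2 h2

lemma mulVec_le_sv_one {m n : ℕ} (A : Matrix (Fin m) (Fin n) ℝ) (v : Fin n → ℝ) :
    sqNorm (A.mulVec v) ≤ (sv A 1) ^ 2 * sqNorm v := by
  rcases eq_or_ne v 0 with rfl | hv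
  · simp [sqNorm]
  · set c : ℝ := Real.sqrt (sqNorm (A.mulVec v) / sqNorm v) with hcdef
    have hvpos := sqNorm_pos hv
    have hc2 : c ^ 2 = sqNorm (A.mulVec v) / sqNorm v :=
      Real.sq_sqrt (div_nonneg (sqNorm_nonneg _) (sqNorm_nonneg _))
    have hmem : c ∈ svSet A 1 := by
      refine ⟨Real.sqrt_nonneg _, Submodule.span ℝ {v}, finrank_span_singleton hv, ?_⟩
      intro y hy
      obtain ⟨t, rfl⟩ := Submodule.mem_span_singleton.1 hy
      rw [Matrix.mulVec_smul, sqNorm_smul, sqNorm_smul, hc2]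
      rw [div_mul_eq_mul_div, div_le_iff₀ hvpos]
      ring_nf
      exact le_refl _
    have hle : c ≤ sv A 1 := le_csSup (svSet_bddAbove A one_ne_zero) hmem
    have h0 : (0:ℝ) ≤ sv A 1 := (Real.sqrt_nonneg _).trans hle
    have : c ^ 2 ≤ (sv A 1) ^ 2 := by
      exact pow_le_pow_left₀ (Real.sqrt_nonneg _) hle 2
    calc sqNorm (A.mulVec v) = c ^ 2 * sqNorm v := by
          rw [hc2]; field_simp
      _ ≤ (sv A 1) ^ 2 * sqNorm v := by
          exact mul_le_mul_of_nonneg_right this (sqNorm_nonneg v)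

lemma sv_one_nonneg {m n : ℕ} (A : Matrix (Fin m) (Fin n) ℝ) (hn : n ≠ 0) : 0 ≤ sv A 1 := by
  have hmem : (0:ℝ) ∈ svSet A 1 := by
    have : (Pi.single (⟨0, Nat.pos_of_ne_zero hn⟩ : Fin n) (1:ℝ) : Fin n → ℝ) ≠ 0 := by
      intro h
      have := congrFun h ⟨0, Nat.pos_of_ne_zero hn⟩
      simp at this
    exact ⟨le_refl 0, Submodule.span ℝ {_}, finrank_span_singleton this,
      fun y _ => by simpa using sqNorm_nonneg (A.mulVec y)⟩
  exact le_csSup (svSet_bddAbove A one_ne_zero) hmem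


def rowSpace {m n : ℕ} (A : Matrix (Fin m) (Fin n) ℝ) : Submodule ℝ (Fin n → ℝ) :=
  LinearMap.range A.transpose.mulVecLin

lemma finrank_rowSpace {m n : ℕ} (A : Matrix (Fin m) (Fin n) ℝ) :
    Module.finrank ℝ (rowSpace A) = A.rank := by
  rw [← Matrix.rank_transpose A]; rfl

lemma dot_orth {m n : ℕ} {A : Matrix (Fin m) (Fin n) ℝ} {z y : Fin n → ℝ}
    (hz : A.mulVec z = 0) (hy : y ∈ rowSpace A) : z ⬝ᵥ y = 0 := by
  obtain ⟨u, rfl⟩ := hy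
  show z ⬝ᵥ A.transpose.mulVec u = 0
  rw [Matrix.dotProduct_mulVec, ← Matrix.mulVec_transpose, Matrix.transpose_transpose, hz,
    zero_dotProduct]

lemma rowSpace_inj {m n : ℕ} {A : Matrix (Fin m) (Fin n) ℝ} {y : Fin n → ℝ}
    (hy : y ∈ rowSpace A) (h0 : A.mulVec y = 0) : y = 0 := by
  have := dot_orth h0 hy
  rw [← sqNorm_eq_dot] at this
  exact sqNorm_eq_zero this

lemma continuous_sqNorm {n : ℕ} : Continuous fun y : Fin n → ℝ => sqNorm y := by
  unfold sqNorm
  exact continuous_finset_sum _ fun i _ => (continuous_apply i).pow 2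

lemma rank_ne_zero {m n : ℕ} (A : Matrix (Fin m) (Fin n) ℝ) (hA : A ≠ 0) : A.rank ≠ 0 := by
  intro h
  apply hA
  have hb : LinearMap.range A.mulVecLin = ⊥ := Submodule.finrank_eq_zero.1 h
  ext i j
  have : A.mulVec (Pi.single j 1) = 0 := by
    have : A.mulVecLin (Pi.single j 1) ∈ LinearMap.range A.mulVecLin := LinearMap.mem_range_self _ _
    rw [hb] at this
    simpa using this
  have := congrFun this i
  simpa [Matrix.mulVec_single] using this

lemma exists_pos_lower {m n : ℕ} (A : Matrix (Fin m) (Fin n) ℝ) (hA : A ≠ 0) :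
    ∃ c : ℝ, 0 < c ∧ c ∈ svSet A A.rank := by
  have hrk : A.rank ≠ 0 := rank_ne_zero A hA
  -- the sphere of the row space
  set Sph : Set (Fin n → ℝ) := {y | y ∈ rowSpace A ∧ sqNorm y = 1} with hS
  have hg : Continuous fun y : Fin n → ℝ => sqNorm (A.mulVec y) :=
    continuous_sqNorm.comp A.mulVecLin.continuous_of_finiteDimensional
  have hclosed : IsClosed Sph := by
    have h1 : IsClosed (rowSpace A : Set (Fin n → ℝ)) :=
      Submodule.closed_of_finiteDimensional (rowSpace A)
    have h2 : IsClosed {y : Fin n → ℝ | sqNorm y = 1} :=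
      isClosed_singleton.preimage continuous_sqNorm
    exact h1.inter h2
  have hbdd : Bornology.IsBounded Sph := by
    refine (Metric.isBounded_closedBall (x := (0 : Fin n → ℝ)) (r := 1)).subset ?_
    intro y hy
    rw [Metric.mem_closedBall, dist_zero_right]
    refine (pi_norm_le_iff_of_nonneg zero_le_one).2 fun i => ?_
    rw [Real.norm_eq_abs, ← Real.sqrt_one, ← Real.sqrt_sq_eq_abs]
    refine Real.sqrt_le_sqrt ?_
    rw [← hy.2]
    exact Finset.single_le_sum (f := fun i => y i ^ 2) (fun i _ => sq_nonneg _) (Finset.mem_univ i)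
  have hK : IsCompact Sph := Metric.isCompact_of_isClosed_isBounded hclosed hbdd
  have hne : Sph.Nonempty := by
    have hbot : rowSpace A ≠ ⊥ := by
      intro h
      have := finrank_rowSpace A
      rw [h] at this; simp at this; exact hrk this.symm
    obtain ⟨v, hv, hv0⟩ := Submodule.exists_mem_ne_zero_of_ne_bot hbot
    have hvp := sqNorm_pos hv0
    refine ⟨(Real.sqrt (sqNorm v))⁻¹ • v, Submodule.smul_mem _ _ hv, ?_⟩
    rw [sqNorm_smul, inv_pow, Real.sq_sqrt (sqNorm_nonneg v), inv_mul_cancel₀ hvp.ne']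
  obtain ⟨y0, hy0, hmin⟩ := hK.exists_isMinOn hne hg.continuousOn
  set μ := sqNorm (A.mulVec y0) with hμ
  have hy00 : y0 ≠ 0 := by
    intro h
    have h1 := hy0.2
    rw [h] at h1
    simp [sqNorm] at h1
  have hμpos : 0 < μ := by
    refine sqNorm_pos fun h => hy00 (rowSpace_inj hy0.1 h)
  refine ⟨Real.sqrt μ, Real.sqrt_pos.2 hμpos, Real.sqrt_nonneg _, rowSpace A, finrank_rowSpace A, ?_⟩
  intro y hyR
  rw [Real.sq_sqrt hμpos.le]
  rcases eq_or_ne y 0 with rfl | hy0'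
  · simp [sqNorm, Matrix.mulVec_zero]
  · have hyp := sqNorm_pos hy0'
    have hmem : (Real.sqrt (sqNorm y))⁻¹ • y ∈ Sph := by
      refine ⟨Submodule.smul_mem _ _ hyR, ?_⟩
      rw [sqNorm_smul, inv_pow, Real.sq_sqrt (sqNorm_nonneg y), inv_mul_cancel₀ hyp.ne']
    have := hmin hmem
    have h2 : μ ≤ (sqNorm y)⁻¹ * sqNorm (A.mulVec y) := by
      simpa [Matrix.mulVec_smul, sqNorm_smul, inv_pow, Real.sq_sqrt (sqNorm_nonneg y)] using this
    calc μ * sqNorm y ≤ ((sqNorm y)⁻¹ * sqNorm (A.mulVec y)) * sqNorm y :=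
          mul_le_mul_of_nonneg_right h2 (sqNorm_nonneg y)
      _ = sqNorm (A.mulVec y) := by field_simp


lemma n_ne_zero {m n : ℕ} (A : Matrix (Fin m) (Fin n) ℝ) (hA : A ≠ 0) : n ≠ 0 := by
  intro h
  apply hA
  ext i j
  exact absurd j.2 (by omega)

lemma svSet_rank_nonempty {m n : ℕ} (A : Matrix (Fin m) (Fin n) ℝ) (hA : A ≠ 0) :
    (svSet A A.rank).Nonempty := by
  obtain ⟨c, _, hc⟩ := exists_pos_lower A hA
  exact ⟨c, hc⟩

lemma sv_rank_pos {m n : ℕ} (A : Matrix (Fin m) (Fin n) ℝ) (hA : A ≠ 0) :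
    0 < sv A A.rank := by
  obtain ⟨c, hc0, hc⟩ := exists_pos_lower A hA
  exact hc0.trans_le (le_csSup (svSet_bddAbove A (rank_ne_zero A hA)) hc)

lemma sv_one_pos {m n : ℕ} (A : Matrix (Fin m) (Fin n) ℝ) (hA : A ≠ 0) :
    0 < sv A 1 := by
  have h0 : 0 ≤ sv A 1 := sv_one_nonneg A (n_ne_zero A hA)
  rcases h0.lt_or_eq with h | h
  · exact h
  · exfalso
    have hex : ∃ i j, A i j ≠ 0 := by
      by_contra hc
      push_neg at hc
      exact hA (by ext i j; exact hc i j)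
    obtain ⟨i, j, hij⟩ := hex
    have h1 : 0 < sqNorm (A.mulVec (Pi.single j 1)) := by
      apply sqNorm_pos
      intro hz
      apply hij
      have := congrFun hz i
      simpa [Matrix.mulVec_single] using this
    have h2 := mulVec_le_sv_one A (Pi.single j 1)
    rw [← h] at h2
    nlinarith [h1, h2]

lemma sv_rank_le_sv_one {m n : ℕ} (A : Matrix (Fin m) (Fin n) ℝ) (hA : A ≠ 0) :
    sv A A.rank ≤ sv A 1 := by
  refine csSup_le (svSet_rank_nonempty A hA) fun c hc => ?_
  obtain ⟨hc0, V, hVr, hprop⟩ := hc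
  have hVbot : V ≠ ⊥ := by
    intro h; rw [h] at hVr; simp at hVr; exact rank_ne_zero A hA hVr.symm
  obtain ⟨y, hyV, hy0⟩ := Submodule.exists_mem_ne_zero_of_ne_bot hVbot
  have h1 := (hprop y hyV).trans (mulVec_le_sv_one A y)
  have h2 : c ^ 2 ≤ (sv A 1) ^ 2 :=
    le_of_mul_le_mul_right (by simpa [mul_comm] using h1) (sqNorm_pos hy0)
  calc c = Real.sqrt (c ^ 2) := (Real.sqrt_sq hc0).symm
    _ ≤ Real.sqrt ((sv A 1) ^ 2) := Real.sqrt_le_sqrt h2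
    _ = sv A 1 := Real.sqrt_sq (sv_one_nonneg A (n_ne_zero A hA))

lemma sv_rank_lower {m n : ℕ} (A : Matrix (Fin m) (Fin n) ℝ) (hA : A ≠ 0)
    {e : Fin n → ℝ} (he : e ∈ rowSpace A) :
    (sv A A.rank) ^ 2 * sqNorm e ≤ sqNorm (A.mulVec e) := by
  rcases eq_or_ne e 0 with rfl | he0
  · simp [sqNorm, Matrix.mulVec_zero]
  have hep := sqNorm_pos he0
  have hAe : A.mulVec e ≠ 0 := fun h => he0 (rowSpace_inj he h)
  -- every feasible c satisfies c^2 * sqNorm e ≤ sqNorm (A e)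
  have key : ∀ c ∈ svSet A A.rank, c ^ 2 * sqNorm e ≤ sqNorm (A.mulVec e) := by
    rintro c ⟨hc0, V, hVr, hprop⟩
    set K := LinearMap.ker A.mulVecLin with hK
    have heK : e ∉ K := fun h => hAe h
    set W := K ⊔ Submodule.span ℝ {e} with hW
    have hKW : K < W := by
      refine lt_of_le_of_ne le_sup_left fun h => heK ?_
      rw [h]
      exact Submodule.mem_sup_right (Submodule.mem_span_singleton_self e)
    have h1 : Module.finrank ℝ K < Module.finrank ℝ W := Submodule.finrank_lt_finrank_of_lt hKW
    have h2 : Module.finrank ℝ (LinearMap.range A.mulVecLin) + Module.finrank ℝ K = n := by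
      simpa using LinearMap.finrank_range_add_finrank_ker A.mulVecLin
    have h3 : Module.finrank ℝ (LinearMap.range A.mulVecLin) = A.rank := rfl
    have h4 := Submodule.finrank_sup_add_finrank_inf_eq V W
    have h5 : Module.finrank ℝ ↥(V ⊔ W) ≤ n := by
      simpa using Submodule.finrank_le (V ⊔ W)
    have h6 : Module.finrank ℝ ↥(V ⊓ W) ≠ 0 := by omega
    have h7 : V ⊓ W ≠ ⊥ := by
      intro h; rw [h] at h6; simp at h6
    obtain ⟨y, hyVW, hy0⟩ := Submodule.exists_mem_ne_zero_of_ne_bot h7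
    obtain ⟨hyV, hyW⟩ := hyVW
    obtain ⟨z, hzK, w, hw, rfl⟩ := Submodule.mem_sup.1 hyW
    obtain ⟨t, rfl⟩ := Submodule.mem_span_singleton.1 hw
    have hAz : A.mulVec z = 0 := hzK
    have hze : z ⬝ᵥ e = 0 := dot_orth hAz he
    have hnorm : sqNorm (z + t • e) = sqNorm z + t ^ 2 * sqNorm e := by
      rw [sqNorm_add, sqNorm_smul, dotProduct_smul, hze, smul_zero]
      ring
    have hAy : A.mulVec (z + t • e) = t • A.mulVec e := by
      rw [Matrix.mulVec_add, hAz, Matrix.mulVec_smul, zero_add]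
    have hineq := hprop _ hyV
    rw [hnorm, hAy, sqNorm_smul] at hineq
    rcases eq_or_ne t 0 with rfl | ht
    · -- then y = z ≠ 0 and c = 0
      have hzne : z ≠ 0 := by simpa using hy0
      have : c ^ 2 * sqNorm z ≤ 0 := by simpa using hineq
      have hc2 : c ^ 2 ≤ 0 := le_of_mul_le_mul_right (by simpa [mul_comm] using this) (sqNorm_pos hzne)
      have : c = 0 := by nlinarith [sq_nonneg c]
      rw [this]
      simpa using sqNorm_nonneg (A.mulVec e)
    · have ht2 : (0:ℝ) < t ^ 2 := by positivity
      have h8 : c ^ 2 * (t ^ 2 * sqNorm e) ≤ t ^ 2 * sqNorm (A.mulVec e) := by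
        nlinarith [sq_nonneg c, sqNorm_nonneg z]
      nlinarith [h8, ht2]
  -- now pass to the sup
  set B := Real.sqrt (sqNorm (A.mulVec e) / sqNorm e) with hB
  have hsv_le : sv A A.rank ≤ B := by
    refine csSup_le (svSet_rank_nonempty A hA) fun c hc => ?_
    have h1 := key c hc
    have hc0 := hc.1
    have h2 : c ^ 2 ≤ sqNorm (A.mulVec e) / sqNorm e := (le_div_iff₀ hep).2 h1
    exact (Real.le_sqrt hc0 (div_nonneg (sqNorm_nonneg _) (sqNorm_nonneg _))).2 h2
  have h0 : 0 ≤ sv A A.rank := (sv_rank_pos A hA).le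
  have h2 : (sv A A.rank) ^ 2 ≤ sqNorm (A.mulVec e) / sqNorm e := by
    have := pow_le_pow_left₀ h0 hsv_le 2
    rwa [Real.sq_sqrt (div_nonneg (sqNorm_nonneg _) (sqNorm_nonneg _))] at this
  calc (sv A A.rank) ^ 2 * sqNorm e ≤ (sqNorm (A.mulVec e) / sqNorm e) * sqNorm e :=
        mul_le_mul_of_nonneg_right h2 (sqNorm_nonneg e)
    _ = sqNorm (A.mulVec e) := by field_simp


lemma frobSq_pos_of_rows {d n : ℕ} {B : Matrix (Fin d) (Fin n) ℝ} (hd : Nonempty (Fin d))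
    (hrows : ∀ i, B i ≠ 0) : 0 < frobSq B := by
  rw [frobSq_eq_sum_rows]
  exact Finset.sum_pos (fun i _ => sqNorm_pos (hrows i)) Finset.univ_nonempty

end CSK

open CSK Matrix

/-- geometric convergence of the count-sketch Kaczmarz method:
`‖x_k - x⋆‖² ≤ ρ^k ‖x₀ - x⋆‖²` with `ρ = 1 - (1-ε)³σ_r(A)²/(n‖A‖₂²) ∈ [0,1)`,
and in particular `x_k → x⋆`. -/
theorem csk_geometric_convergence {m n d : ℕ}
    (A : Matrix (Fin m) (Fin n) ℝ) (hA : A ≠ 0) (b : Fin m → ℝ) (xs : Fin n → ℝ)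
    (hxs : A.mulVec xs = b) (hxs_row : ∃ z : Fin m → ℝ, A.transpose.mulVec z = xs)
    (ε : ℝ) (hε0 : 0 < ε) (hε1 : ε < 1)
    (S : Matrix (Fin d) (Fin m) ℝ)
    (hemb : ∀ v : Fin n → ℝ,
      (1 - ε) * sqNorm (A.mulVec v) ≤ sqNorm ((S * A).mulVec v) ∧
      sqNorm ((S * A).mulVec v) ≤ (1 + ε) * sqNorm (A.mulVec v))
    (hrows : ∀ i : Fin d, (S * A) i ≠ 0)
    (x : ℕ → Fin n → ℝ) (hx0 : ∃ z : Fin m → ℝ, A.transpose.mulVec z = x 0)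
    (ik : ℕ → Fin d)
    (hik : ∀ (k : ℕ) (i : Fin d),
      |S.mulVec b i - (S * A).mulVec (x k) i| / Real.sqrt (sqNorm ((S * A) i)) ≤
      |S.mulVec b (ik k) - (S * A).mulVec (x k) (ik k)|
        / Real.sqrt (sqNorm ((S * A) (ik k))))
    (hupd : ∀ k : ℕ, x (k + 1) = x k +
      ((S.mulVec b (ik k) - ∑ j, (S * A) (ik k) j * x k j) / sqNorm ((S * A) (ik k)))
        • (S * A) (ik k)) :
    (0 ≤ 1 - (1 - ε) ^ 3 * (sv A A.rank) ^ 2 / (n * (sv A 1) ^ 2) ∧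
      1 - (1 - ε) ^ 3 * (sv A A.rank) ^ 2 / (n * (sv A 1) ^ 2) < 1) ∧
    (∀ k : ℕ, sqNorm (x k - xs) ≤
      (1 - (1 - ε) ^ 3 * (sv A A.rank) ^ 2 / (n * (sv A 1) ^ 2)) ^ k
        * sqNorm (x 0 - xs)) ∧
    Filter.Tendsto x Filter.atTop (nhds xs) := by
  have hn : n ≠ 0 := n_ne_zero A hA
  have hn1 : (1:ℝ) ≤ (n:ℝ) := by exact_mod_cast Nat.one_le_iff_ne_zero.2 hn
  set σr := sv A A.rank with hσr
  set σ1 := sv A 1 with hσ1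
  have hσrpos : 0 < σr := sv_rank_pos A hA
  have hσ1pos : 0 < σ1 := sv_one_pos A hA
  have hσle : σr ≤ σ1 := sv_rank_le_sv_one A hA
  set q : ℝ := (1 - ε) ^ 3 * σr ^ 2 / (n * σ1 ^ 2) with hq
  have hden : (0:ℝ) < n * σ1 ^ 2 := by positivity
  have hqpos : 0 < q := by
    apply div_pos _ hden
    have : (0:ℝ) < 1 - ε := by linarith
    positivity
  have hqle1 : q ≤ 1 := by
    rw [hq, div_le_one hden]
    have h1 : (1 - ε) ^ 3 ≤ 1 :=
      pow_le_one₀ (by linarith) (by linarith)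
    have h2 : σr ^ 2 ≤ σ1 ^ 2 := pow_le_pow_left₀ hσrpos.le hσle 2
    calc (1 - ε) ^ 3 * σr ^ 2 ≤ 1 * σ1 ^ 2 :=
          mul_le_mul h1 h2 (sq_nonneg _) zero_le_one
      _ ≤ (n:ℝ) * σ1 ^ 2 := by nlinarith [sq_nonneg σ1]
  set ρ : ℝ := 1 - q with hρ
  have hρ0 : 0 ≤ ρ := by linarith
  have hρ1 : ρ < 1 := by linarith
  -- basic setup
  set B := S * A with hBdef
  have hd : Nonempty (Fin d) := ⟨ik 0⟩
  have hF : 0 < frobSq B := frobSq_pos_of_rows hd hrows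
  have hBxs : B.mulVec xs = S.mulVec b := by
    rw [hBdef, ← Matrix.mulVec_mulVec, hxs]
  have hres : ∀ k i, S.mulVec b i - B.mulVec (x k) i = -(B.mulVec (x k - xs) i) := by
    intro k i
    rw [Matrix.mulVec_sub]
    simp [hBxs]
  -- invariant: iterates stay in the row space
  have hrowB : ∀ i : Fin d, B i ∈ rowSpace A := by
    intro i
    refine ⟨fun l => S i l, ?_⟩
    funext j
    rw [hBdef]
    simp [Matrix.mulVecLin, Matrix.mulVec, Matrix.vecMul, Matrix.mul_apply, dotProduct,
      Matrix.transpose_apply, mul_comm]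
  have hxsR : xs ∈ rowSpace A := by
    obtain ⟨z, hz⟩ := hxs_row
    exact ⟨z, hz⟩
  have hx0R : x 0 ∈ rowSpace A := by
    obtain ⟨z, hz⟩ := hx0
    exact ⟨z, hz⟩
  have hinv : ∀ k, x k - xs ∈ rowSpace A := by
    intro k
    induction k with
    | zero => exact Submodule.sub_mem _ hx0R hxsR
    | succ k ih =>
      rw [hupd k]
      have h : ∀ c : ℝ, x k + c • B (ik k) - xs = (x k - xs) + c • B (ik k) := by
        intro c; abel
      rw [h]
      exact Submodule.add_mem _ ih (Submodule.smul_mem _ _ (hrowB (ik k)))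
  -- one-step identity
  have hstep : ∀ k, sqNorm (x (k+1) - xs) =
      sqNorm (x k - xs) - (S.mulVec b (ik k) - B.mulVec (x k) (ik k)) ^ 2
        / sqNorm (B (ik k)) := by
    intro k
    set R := S.mulVec b (ik k) - B.mulVec (x k) (ik k) with hR
    set sa := sqNorm (B (ik k)) with hsa
    have hsapos : 0 < sa := sqNorm_pos (hrows (ik k))
    have hsum : ∑ j, B (ik k) j * x k j = B.mulVec (x k) (ik k) := rfl
    have hupd' : x (k+1) - xs = (x k - xs) + (R / sa) • B (ik k) := by
      rw [hupd k, hsum]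
      abel
    rw [hupd', sqNorm_add, sqNorm_smul, dotProduct_smul]
    have hdot : (x k - xs) ⬝ᵥ B (ik k) = -R := by
      rw [dotProduct_comm]
      have : B (ik k) ⬝ᵥ (x k - xs) = B.mulVec (x k - xs) (ik k) := rfl
      rw [this, hR, hres k (ik k), neg_neg]
    rw [hdot]
    rw [← hsa, smul_eq_mul]
    field_simp
    ring
  -- lower bound on the decrement
  have hdec : ∀ k, (1 - ε) * σr ^ 2 * sqNorm (x k - xs) ≤
      (S.mulVec b (ik k) - B.mulVec (x k) (ik k)) ^ 2 / sqNorm (B (ik k)) * frobSq B := by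
    intro k
    set R := S.mulVec b (ik k) - B.mulVec (x k) (ik k) with hR
    set sa := sqNorm (B (ik k)) with hsa
    have hsapos : 0 < sa := sqNorm_pos (hrows (ik k))
    have hrowbd : ∀ i, (S.mulVec b i - B.mulVec (x k) i) ^ 2 ≤ R ^ 2 / sa * sqNorm (B i) := by
      intro i
      have hsi : 0 < sqNorm (B i) := sqNorm_pos (hrows i)
      have h := hik k i
      have h2 := pow_le_pow_left₀ (by positivity) h 2
      rw [div_pow, div_pow, sq_abs, sq_abs, Real.sq_sqrt hsi.le, Real.sq_sqrt hsapos.le] at h2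
      calc (S.mulVec b i - B.mulVec (x k) i) ^ 2
          = (S.mulVec b i - B.mulVec (x k) i) ^ 2 / sqNorm (B i) * sqNorm (B i) := by
            field_simp
        _ ≤ R ^ 2 / sa * sqNorm (B i) := mul_le_mul_of_nonneg_right h2 hsi.le
    have hsumbd : sqNorm (B.mulVec (x k - xs)) ≤ R ^ 2 / sa * frobSq B := by
      rw [frobSq_eq_sum_rows, Finset.mul_sum]
      rw [sqNorm]
      refine Finset.sum_le_sum fun i _ => ?_
      have : B.mulVec (x k - xs) i ^ 2 = (S.mulVec b i - B.mulVec (x k) i) ^ 2 := by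
        rw [hres k i]; ring
      rw [this]
      exact hrowbd i
    have hemb' := (hemb (x k - xs)).1
    have hlow := sv_rank_lower A hA (hinv k)
    have h1ε : (0:ℝ) < 1 - ε := by linarith
    calc (1 - ε) * σr ^ 2 * sqNorm (x k - xs)
        = (1 - ε) * (σr ^ 2 * sqNorm (x k - xs)) := by ring
      _ ≤ (1 - ε) * sqNorm (A.mulVec (x k - xs)) := by
          exact mul_le_mul_of_nonneg_left hlow h1ε.le
      _ ≤ sqNorm (B.mulVec (x k - xs)) := hemb'
      _ ≤ R ^ 2 / sa * frobSq B := hsumbd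
  -- Frobenius norm bound
  have hFB : frobSq B ≤ (1 + ε) * ((n:ℝ) * σ1 ^ 2) := by
    calc frobSq B = ∑ j, sqNorm (B.mulVec (Pi.single j 1)) := frobSq_eq_sum_cols B
      _ ≤ ∑ j, (1 + ε) * sqNorm (A.mulVec (Pi.single j 1)) :=
          Finset.sum_le_sum fun j _ => (hemb _).2
      _ ≤ ∑ j : Fin n, (1 + ε) * (σ1 ^ 2 * sqNorm (Pi.single j (1:ℝ))) := by
          refine Finset.sum_le_sum fun j _ => ?_
          exact mul_le_mul_of_nonneg_left (mulVec_le_sv_one A _) (by linarith)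
      _ = ∑ j : Fin n, (1 + ε) * σ1 ^ 2 := by
          refine Finset.sum_congr rfl fun j _ => ?_
          have : sqNorm (Pi.single j (1:ℝ)) = 1 := by
            simp [sqNorm, Pi.single_apply]
          rw [this, mul_one]
      _ = (1 + ε) * ((n:ℝ) * σ1 ^ 2) := by
          rw [Finset.sum_const]
          simp [Finset.card_univ]
          ring
  -- contraction
  have hcontract : ∀ k, sqNorm (x (k+1) - xs) ≤ ρ * sqNorm (x k - xs) := by
    intro k
    have hsapos : 0 < sqNorm (B (ik k)) := sqNorm_pos (hrows (ik k))
    have hC2 : (0:ℝ) < (1 + ε) * ((n:ℝ) * σ1 ^ 2) := mul_pos (by linarith) hden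
    have hD : (1 - ε) * σr ^ 2 * sqNorm (x k - xs) / ((1 + ε) * ((n:ℝ) * σ1 ^ 2)) ≤
        (S.mulVec b (ik k) - B.mulVec (x k) (ik k)) ^ 2 / sqNorm (B (ik k)) := by
      rw [div_le_iff₀ hC2]
      refine le_trans (hdec k) ?_
      exact mul_le_mul_of_nonneg_left hFB (div_nonneg (sq_nonneg _) (sqNorm_nonneg _))
    have hq_le : q * sqNorm (x k - xs) ≤
        (1 - ε) * σr ^ 2 * sqNorm (x k - xs) / ((1 + ε) * ((n:ℝ) * σ1 ^ 2)) := by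
      have hu0 : (0:ℝ) < 1 - ε := by linarith
      have hk1 : (1 - ε) ^ 2 * (1 + ε) ≤ 1 := by nlinarith [mul_pos hε0 hε0, sq_nonneg ε]
      have hkey : (1 - ε) ^ 3 * (1 + ε) ≤ 1 - ε := by
        nlinarith [mul_le_mul_of_nonneg_left hk1 hu0.le]
      have hnn : (0:ℝ) ≤ σr ^ 2 * sqNorm (x k - xs) * ((n:ℝ) * σ1 ^ 2) :=
        mul_nonneg (mul_nonneg (sq_nonneg _) (sqNorm_nonneg _)) hden.le
      rw [hq, div_mul_eq_mul_div, div_le_div_iff₀ hden hC2]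
      refine le_trans (le_of_eq (by ring)) (le_trans
        (mul_le_mul_of_nonneg_right hkey hnn) (le_of_eq (by ring)))
    have h2 := le_trans hq_le hD
    rw [hstep k, hρ]
    have hnn2 : (0:ℝ) ≤ sqNorm (x k - xs) := sqNorm_nonneg _
    linarith [h2]
  -- geometric bound by induction
  have hbound : ∀ k, sqNorm (x k - xs) ≤ ρ ^ k * sqNorm (x 0 - xs) := by
    intro k
    induction k with
    | zero => simp
    | succ k ih =>
      calc sqNorm (x (k+1) - xs) ≤ ρ * sqNorm (x k - xs) := hcontract k
        _ ≤ ρ * (ρ ^ k * sqNorm (x 0 - xs)) := mul_le_mul_of_nonneg_left ih hρ0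
        _ = ρ ^ (k+1) * sqNorm (x 0 - xs) := by ring
  refine ⟨⟨hρ0, hρ1⟩, hbound, ?_⟩
  -- convergence
  have hgeo : Filter.Tendsto (fun k => ρ ^ k * sqNorm (x 0 - xs)) Filter.atTop (nhds 0) := by
    have h := (tendsto_pow_atTop_nhds_zero_of_lt_one hρ0 hρ1).mul_const (sqNorm (x 0 - xs))
    rwa [zero_mul] at h
  have hsq : Filter.Tendsto (fun k => sqNorm (x k - xs)) Filter.atTop (nhds 0) :=
    squeeze_zero (fun k => sqNorm_nonneg _) hbound hgeo
  rw [tendsto_pi_nhds]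
  intro i
  have hi : ∀ k, (x k i - xs i) ^ 2 ≤ sqNorm (x k - xs) := by
    intro k
    refine Finset.single_le_sum (f := fun j => (x k j - xs j) ^ 2)
      (fun j _ => sq_nonneg _) (Finset.mem_univ i)
  have h2 : Filter.Tendsto (fun k => (x k i - xs i) ^ 2) Filter.atTop (nhds 0) :=
    squeeze_zero (fun k => sq_nonneg _) hi hsq
  have h3 : Filter.Tendsto (fun k => |x k i - xs i|) Filter.atTop (nhds 0) := by
    have := h2.sqrt
    simpa [Real.sqrt_sq_eq_abs] using this
  rw [tendsto_iff_dist_tendsto_zero]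
  simpa [Real.dist_eq] using h3
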